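/- Let p, q : ℕ → ℝ be nonnegative sequences, let j ≥ 1 be an integer and r ∈ (0, 1), and suppose p(t + j) ≤ r·p(t) + Σ_{i=0}^{j−1} q(t + i) for all t ∈ ℕ. Let λ ∈ (0, 1) satisfy λ^j ≥ 2r/(1 + r). Then for every k ∈ ℕ, p^{λ,k} ≤ (2j/(r(1 − r)))·q^{λ,k} + c_λ, where c_λ = (λ^j/(λ^j − r))·Σ_{t=0}^{j−1} λ^{−t} p(t). -/
import Mathlib


/-- The λ-sequence of a sequence `p`: `p^{λ,k} = max_{0 ≤ t ≤ k} p(t)/λ^t`. -/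
noncomputable def lamSeq (p : ℕ → ℝ) (lam : ℝ) (k : ℕ) : ℝ :=
  (Finset.range (k + 1)).sup' (by simp) (fun t => p t / lam ^ t)

/-- **Proposition 1 of the paper (second part).** If nonnegative sequences `p, q`
satisfy `p(t+j) ≤ r·p(t) + Σ_{i=0}^{j−1} q(t+i)` with `r ∈ (0,1)`, and
`λ ∈ (0,1)` satisfies `λ^j ≥ 2r/(1+r)`, then for every `k`,
`p^{λ,k} ≤ (2j/(r(1−r)))·q^{λ,k} + c_λ`,
where `c_λ = (λ^j/(λ^j − r))·Σ_{t=0}^{j−1} λ^{−t} p(t)`. -/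
theorem lamSeq_bound' (p q : ℕ → ℝ) (hp : ∀ k, 0 ≤ p k) (hq : ∀ k, 0 ≤ q k)
    (j : ℕ) (hj : 1 ≤ j) (r : ℝ) (hr0 : 0 < r) (hr1 : r < 1)
    (hrec : ∀ t, p (t + j) ≤ r * p t + ∑ i ∈ Finset.range j, q (t + i))
    (lam : ℝ) (hlam0 : 0 < lam) (hlam1 : lam < 1)
    (hlamj : 2 * r / (1 + r) ≤ lam ^ j) :
    ∀ k, lamSeq p lam k
      ≤ (2 * j / (r * (1 - r))) * lamSeq q lam k
        + (lam ^ j / (lam ^ j - r)) * ∑ t ∈ Finset.range j, p t / lam ^ t := by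
  intro k
  have hL0 : (0:ℝ) < lam ^ j := pow_pos hlam0 j
  have h2r : 2 * r ≤ lam ^ j * (1 + r) := by
    rw [div_le_iff₀ (by linarith)] at hlamj; linarith
  have hrL : r < lam ^ j := by nlinarith
  set P := lamSeq p lam k with hPdef
  set Q := lamSeq q lam k with hQdef
  set A := ∑ t ∈ Finset.range j, p t / lam ^ t with hAdef
  set B := (r * P + (j : ℝ) * Q) / lam ^ j with hBdef
  have hmem0 : 0 ∈ Finset.range (k + 1) := Finset.mem_range.mpr (Nat.succ_pos k)
  have hQ0 : (0:ℝ) ≤ Q := by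
    have h := Finset.le_sup' (fun t => q t / lam ^ t) hmem0
    simp only [pow_zero, div_one] at h
    exact le_trans (hq 0) h
  have hP0 : (0:ℝ) ≤ P := by
    have h := Finset.le_sup' (fun t => p t / lam ^ t) hmem0
    simp only [pow_zero, div_one] at h
    exact le_trans (hp 0) h
  have hA0 : (0:ℝ) ≤ A :=
    Finset.sum_nonneg fun i _ => div_nonneg (hp i) (pow_nonneg hlam0.le i)
  have hC0 : (0:ℝ) ≤ 2 * j / (r * (1 - r)) := by
    apply div_nonneg (by positivity)
    nlinarith
  have hc0 : (0:ℝ) ≤ lam ^ j / (lam ^ j - r) * A := by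
    apply mul_nonneg _ hA0
    exact div_nonneg hL0.le (by linarith)
  have hkey : P ≤ max A B := by
    rw [hPdef]
    apply Finset.sup'_le
    intro t ht
    rcases lt_or_ge t j with htj | htj
    · refine le_max_of_le_left ?_
      exact Finset.single_le_sum
        (fun i _ => div_nonneg (hp i) (pow_nonneg hlam0.le i))
        (Finset.mem_range.mpr htj)
    · refine le_max_of_le_right ?_
      obtain ⟨s, rfl⟩ : ∃ s, t = s + j := ⟨t - j, (Nat.sub_add_cancel htj).symm⟩
      have hsk : s + j ≤ k := Nat.lt_succ_iff.mp (Finset.mem_range.mp ht)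
      have hsP : p s / lam ^ s ≤ P :=
        Finset.le_sup' (fun t => p t / lam ^ t)
          (Finset.mem_range.mpr (by omega))
      have hterm : ∀ i ∈ Finset.range j, q (s + i) / lam ^ (s + j) ≤ Q / lam ^ j := by
        intro i hi
        have hij : i < j := Finset.mem_range.mp hi
        have hpow : lam ^ (s + i) * lam ^ j ≤ lam ^ (s + j) := by
          rw [← pow_add]
          exact pow_le_pow_of_le_one hlam0.le hlam1.le (by omega)
        have h1 : q (s + i) / lam ^ (s + j) ≤ q (s + i) / (lam ^ (s + i) * lam ^ j) :=
          div_le_div_of_nonneg_left (hq _) (by positivity) hpow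
        have h2 : q (s + i) / lam ^ (s + i) ≤ Q :=
          Finset.le_sup' (fun t => q t / lam ^ t)
            (Finset.mem_range.mpr (by omega))
        calc q (s + i) / lam ^ (s + j)
            ≤ q (s + i) / (lam ^ (s + i) * lam ^ j) := h1
          _ = (q (s + i) / lam ^ (s + i)) / lam ^ j := by ring
          _ ≤ Q / lam ^ j := by gcongr
      calc p (s + j) / lam ^ (s + j)
          ≤ (r * p s + ∑ i ∈ Finset.range j, q (s + i)) / lam ^ (s + j) := by
            gcongr
            exact hrec s
        _ = r * (p s / lam ^ s) / lam ^ j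
              + ∑ i ∈ Finset.range j, q (s + i) / lam ^ (s + j) := by
            rw [add_div, Finset.sum_div, pow_add]; ring
        _ ≤ r * P / lam ^ j + ∑ i ∈ Finset.range j, Q / lam ^ j :=
            add_le_add (by gcongr) (Finset.sum_le_sum hterm)
        _ = r * P / lam ^ j + (j : ℝ) * (Q / lam ^ j) := by
            rw [Finset.sum_const, Finset.card_range, nsmul_eq_mul]
        _ = B := by rw [hBdef]; ring
  rcases max_choice A B with hmax | hmax
  · -- P ≤ A
    rw [hmax] at hkey
    have hAc : A ≤ lam ^ j / (lam ^ j - r) * A := by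
      have h1 : (1:ℝ) ≤ lam ^ j / (lam ^ j - r) := by
        rw [le_div_iff₀ (by linarith)]; linarith
      nlinarith
    have := mul_nonneg hC0 hQ0
    linarith
  · -- P ≤ B
    rw [hmax] at hkey
    have h1 : P * lam ^ j ≤ r * P + (j : ℝ) * Q := by
      rw [hBdef] at hkey
      exact (le_div_iff₀ hL0).mp hkey
    have h2 : P * (lam ^ j - r) ≤ (j : ℝ) * Q := by nlinarith
    have hD : (0:ℝ) < r * (1 - r) := by nlinarith
    have hD2 : r * (1 - r) ≤ 2 * (lam ^ j - r) := by
      nlinarith [mul_nonneg hr0.le (sq_nonneg (1 - r))]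
    have h3 : P ≤ 2 * j / (r * (1 - r)) * Q := by
      rw [div_mul_eq_mul_div, le_div_iff₀ hD]
      have hj1 : (1:ℝ) ≤ (j:ℝ) := by exact_mod_cast hj
      nlinarith [mul_le_mul_of_nonneg_left hD2 hP0]
    linarith
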